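/- Under the same hypotheses (T² = c(T + id_W) with T self-adjoint tangential part of the golden structure φ on W, N the normal part), for all X, Y ∈ W: ⟨NX, NY⟩ = (1 − c)(⟨X, Y⟩ + ⟨TX, Y⟩). -/

import Mathlib

open RealInnerProductSpace

theorem slant_normal_inner_identity
    {V : Type*} [NormedAddCommGroup V] [InnerProductSpace ℝ V] (φ : V →ₗ[ℝ] V)
    (hφ : ∀ X : V, φ (φ X) = φ X + X)
    (hsa : ∀ X Y : V, ⟪φ X, Y⟫ = ⟪X, φ Y⟫)
    (W : Submodule ℝ V) [CompleteSpace W]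
    (T N : V → V) (hT : ∀ X : V, T X = (Submodule.orthogonalProjectionOnto W (φ X) : V))
    (hN : ∀ X : V, N X = φ X - T X)
    (c : ℝ) (hc : c ∈ Set.Icc (0 : ℝ) 1)
    (hT2 : ∀ X ∈ W, T (T X) = c • (T X + X)) :
    ∀ X ∈ W, ∀ Y ∈ W, ⟪N X, N Y⟫ = (1 - c) * (⟪X, Y⟫ + ⟪T X, Y⟫) := by
  have hTW : ∀ X : V, T X ∈ W := by
    intro X; rw [hT]; exact (Submodule.orthogonalProjectionOnto W (φ X)).2
  have hNperp : ∀ X : V, ∀ w ∈ W, ⟪N X, w⟫ = 0 := by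
    intro X w hw
    have hmem : N X ∈ Wᗮ := by
      rw [hN, hT]
      exact Submodule.sub_starProjection_mem_orthogonal (K := W) (φ X)
    rw [real_inner_comm]
    exact hmem w hw
  have hφeq : ∀ B : V, φ B = T B + N B := by
    intro B; rw [hN B]; abel
  -- ⟨A, φ B⟩ = ⟨A, T B⟩ for A ∈ W
  have hXphi : ∀ A ∈ W, ∀ B : V, ⟪A, φ B⟫ = ⟪A, T B⟫ := by
    intro A hA B
    have h := hNperp B A hA
    rw [real_inner_comm] at h
    rw [hφeq B, inner_add_right, h, add_zero]
  have hphiX : ∀ B : V, ∀ A ∈ W, ⟪φ B, A⟫ = ⟪T B, A⟫ := by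
    intro B A hA
    rw [real_inner_comm, hXphi A hA B, real_inner_comm]
  intro X hX Y hY
  have h1 : ⟪N X, N Y⟫ = ⟪N X, φ Y⟫ := by
    rw [hN Y, inner_sub_right, hNperp X (T Y) (hTW Y), sub_zero]
  have h3 : ⟪φ X, φ Y⟫ = ⟪X, φ Y⟫ + ⟪X, Y⟫ := by
    rw [hsa X (φ Y), hφ Y, inner_add_right]
  have h4 : ⟪T X, φ Y⟫ = c * (⟪T X, Y⟫ + ⟪X, Y⟫) := by
    rw [hXphi (T X) (hTW X) Y, ← hXphi (T X) (hTW X) Y, ← hsa (T X) Y,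
        hphiX (T X) Y hY, hT2 X hX, real_inner_smul_left, inner_add_left]
  have h5 : ⟪X, φ Y⟫ = ⟪T X, Y⟫ := by
    rw [← hsa X Y, hphiX X Y hY]
  rw [h1, hN X, inner_sub_left, h3, h4, h5]
  ring
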